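/- For every n ≥ 1 and every natural number l, there exists a D3-directing NFA with n states (and some finite alphabet) whose shortest D3-directing word has length l if and only if there exists a PFA with n states (and some finite alphabet) which carefully synchronizes its full state set and whose shortest carefully synchronizing word for the full state set has length l. In particular, the maximum of d₃ over D3-directing NFAs with n states equals the maximum careful synchronization length p(n) over carefully synchronizing PFAs with n states. -/
import Mathlib


/-- Action of an NFA transition function on a subset of states along a word. -/
def nfaRun {n m : ℕ} (δ : Fin n → Fin m → Finset (Fin n)) :
    Finset (Fin n) → List (Fin m) → Finset (Fin n)
  | S, [] => S
  | S, a :: w => nfaRun δ (S.biUnion fun q => δ q a) w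

/-- The word `w` is D3-directing for the NFA `δ`:
the intersection `⋂_{q ∈ Q} q·w` is nonempty. -/
def nfaD3word {n m : ℕ} (δ : Fin n → Fin m → Finset (Fin n)) (w : List (Fin m)) : Prop :=
  ∃ r : Fin n, ∀ q : Fin n, r ∈ nfaRun δ {q} w

/-- Action of a PFA (partial) transition function on a subset of states along a word. -/
def pfaRun {n m : ℕ} (δ : Fin n → Fin m → Option (Fin n)) :
    Finset (Fin n) → List (Fin m) → Finset (Fin n)
  | S, [] => S
  | S, a :: w =>
      pfaRun δ
        (if ∀ q ∈ S, (δ q a).isSome then S.image (fun q => (δ q a).getD q) else ∅) w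

/-- A word `w` carefully synchronizes the subset `S` in the PFA `δ`. -/
def pfaSync {n m : ℕ} (δ : Fin n → Fin m → Option (Fin n)) (S : Finset (Fin n))
    (w : List (Fin m)) : Prop :=
  (pfaRun δ S w).card = 1

-- basic lemmas
lemma pfaRun_empty {n m : ℕ} (δ : Fin n → Fin m → Option (Fin n)) (w : List (Fin m)) :
    pfaRun δ ∅ w = ∅ := by
  induction w with
  | nil => rfl
  | cons a w ih => simpa [pfaRun] using ih

lemma nfaRun_empty {n m : ℕ} (δ : Fin n → Fin m → Finset (Fin n)) (w : List (Fin m)) :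
    nfaRun δ ∅ w = ∅ := by
  induction w with
  | nil => rfl
  | cons a w ih => simpa [nfaRun] using ih

lemma pfaRun_card_le {n m : ℕ} (δ : Fin n → Fin m → Option (Fin n)) :
    ∀ (w : List (Fin m)) (S : Finset (Fin n)), (pfaRun δ S w).card ≤ S.card := by
  intro w
  induction w with
  | nil => intro S; simp [pfaRun]
  | cons a w ih =>
    intro S
    rw [pfaRun]
    split
    · exact le_trans (ih _) (Finset.card_image_le)
    · simp [pfaRun_empty]

lemma pfaRun_singleton_cons {n m : ℕ} (δ : Fin n → Fin m → Option (Fin n))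
    (q : Fin n) (a : Fin m) (w : List (Fin m)) :
    pfaRun δ {q} (a :: w) =
      if (δ q a).isSome then pfaRun δ {(δ q a).getD q} w else ∅ := by
  rw [pfaRun]
  by_cases h : (δ q a).isSome
  · simp [h]
  · simp [h, pfaRun_empty]
lemma pfaRun_subset {n m : ℕ} (δ : Fin n → Fin m → Option (Fin n)) :
    ∀ (w : List (Fin m)) (S T : Finset (Fin n)), S ⊆ T → (pfaRun δ T w).Nonempty →
      pfaRun δ S w ⊆ pfaRun δ T w ∧ (S.Nonempty → (pfaRun δ S w).Nonempty) := by
  intro w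
  induction w with
  | nil => intro S T hST hT; simpa [pfaRun] using hST
  | cons a w ih =>
    intro S T hST hT
    by_cases hdT : ∀ q ∈ T, (δ q a).isSome
    · have hdS : ∀ q ∈ S, (δ q a).isSome := fun q hq => hdT q (hST hq)
      rw [pfaRun, if_pos hdT] at hT
      simp only [pfaRun]
      rw [if_pos hdS, if_pos hdT]
      refine ⟨(ih _ _ (Finset.image_subset_image hST) hT).1, fun hS => ?_⟩
      exact (ih _ _ (Finset.image_subset_image hST) hT).2 (hS.image _)
    · exfalso
      rw [pfaRun, if_neg hdT, pfaRun_empty] at hT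
      exact hT.ne_empty rfl

lemma pfaRun_nonempty {n m : ℕ} (δ : Fin n → Fin m → Option (Fin n)) :
    ∀ (w : List (Fin m)) (T : Finset (Fin n)), T.Nonempty →
      (∀ q ∈ T, (pfaRun δ {q} w).Nonempty) → (pfaRun δ T w).Nonempty := by
  intro w
  induction w with
  | nil => intro T hT _; simpa [pfaRun] using hT
  | cons a w ih =>
    intro T hT hq
    have hdT : ∀ q ∈ T, (δ q a).isSome := by
      intro q hq'
      by_contra hns
      have := hq q hq'
      rw [pfaRun_singleton_cons, if_neg hns] at this
      exact this.ne_empty rfl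
    rw [pfaRun, if_pos hdT]
    refine ih _ (hT.image _) ?_
    intro s hs
    rcases Finset.mem_image.mp hs with ⟨q, hqT, rfl⟩
    have := hq q hqT
    rwa [pfaRun_singleton_cons, if_pos (hdT q hqT)] at this

lemma pfaRun_subset_biUnion {n m : ℕ} (δ : Fin n → Fin m → Option (Fin n)) :
    ∀ (w : List (Fin m)) (T : Finset (Fin n)),
      pfaRun δ T w ⊆ T.biUnion (fun q => pfaRun δ {q} w) := by
  intro w
  induction w with
  | nil => intro T; simp [pfaRun]
  | cons a w ih =>
    intro T
    by_cases hdT : ∀ q ∈ T, (δ q a).isSome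
    · rw [pfaRun, if_pos hdT]
      refine (ih _).trans ?_
      intro x hx
      rcases Finset.mem_biUnion.mp hx with ⟨s, hs, hxs⟩
      rcases Finset.mem_image.mp hs with ⟨q, hqT, rfl⟩
      refine Finset.mem_biUnion.mpr ⟨q, hqT, ?_⟩
      rwa [pfaRun_singleton_cons, if_pos (hdT q hqT)]
    · rw [pfaRun, if_neg hdT, pfaRun_empty]
      exact Finset.empty_subset _

lemma nfaRun_mono {n m : ℕ} (δ : Fin n → Fin m → Finset (Fin n)) :
    ∀ (w : List (Fin m)) (S T : Finset (Fin n)), S ⊆ T → nfaRun δ S w ⊆ nfaRun δ T w := by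
  intro w
  induction w with
  | nil => intro S T h; simpa [nfaRun] using h
  | cons a w ih =>
    intro S T h
    rw [nfaRun, nfaRun]
    exact ih _ _ (Finset.biUnion_subset_biUnion_of_subset_left _ h)

lemma nfaRun_biUnion {n m : ℕ} (δ : Fin n → Fin m → Finset (Fin n)) :
    ∀ (w : List (Fin m)) (S : Finset (Fin n)),
      nfaRun δ S w = S.biUnion (fun q => nfaRun δ {q} w) := by
  intro w
  induction w with
  | nil => intro S; simp [nfaRun]
  | cons a w ih =>
    intro S
    rw [nfaRun, ih, Finset.biUnion_biUnion]
    refine Finset.biUnion_congr rfl ?_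
    intro q _
    rw [nfaRun, Finset.singleton_biUnion, ih]
lemma pfaSync_univ_iff {n m : ℕ} (hn : 1 ≤ n) (δ : Fin n → Fin m → Option (Fin n))
    (w : List (Fin m)) :
    pfaSync δ Finset.univ w ↔ ∃ r : Fin n, ∀ q : Fin n, r ∈ pfaRun δ {q} w := by
  have : NeZero n := ⟨by omega⟩
  constructor
  · intro h
    rcases Finset.card_eq_one.mp h with ⟨r, hr⟩
    refine ⟨r, fun q => ?_⟩
    have hne : (pfaRun δ (Finset.univ : Finset (Fin n)) w).Nonempty := by
      rw [hr]; exact Finset.singleton_nonempty r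
    have := pfaRun_subset δ w {q} Finset.univ (Finset.subset_univ _) hne
    rcases this.2 (Finset.singleton_nonempty q) with ⟨x, hx⟩
    have hx' := this.1 hx
    rw [hr, Finset.mem_singleton] at hx'
    rwa [hx'] at hx
  · rintro ⟨r, hr⟩
    have hne : (pfaRun δ (Finset.univ : Finset (Fin n)) w).Nonempty :=
      pfaRun_nonempty δ w _ Finset.univ_nonempty
        (fun q _ => ⟨r, hr q⟩)
    have hsub : pfaRun δ (Finset.univ : Finset (Fin n)) w ⊆ {r} := by
      refine (pfaRun_subset_biUnion δ w _).trans ?_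
      intro x hx
      rcases Finset.mem_biUnion.mp hx with ⟨q, _, hxq⟩
      have hcard := pfaRun_card_le δ w ({q} : Finset (Fin n))
      rw [Finset.card_singleton] at hcard
      have : x = r := Finset.card_le_one.mp hcard x hxq r (hr q)
      simp [this]
    have := Finset.card_le_card hsub
    rw [Finset.card_singleton] at this
    have h1 := Finset.card_pos.mpr hne
    exact le_antisymm this h1

def pfaToNfa {n m : ℕ} (δ : Fin n → Fin m → Option (Fin n)) :
    Fin n → Fin m → Finset (Fin n) :=
  fun q a => match δ q a with
    | some r => {r}
    | none => ∅

lemma pfaToNfa_run {n m : ℕ} (δ : Fin n → Fin m → Option (Fin n)) :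
    ∀ (w : List (Fin m)) (q : Fin n), nfaRun (pfaToNfa δ) {q} w = pfaRun δ {q} w := by
  intro w
  induction w with
  | nil => intro q; rfl
  | cons a w ih =>
    intro q
    rw [nfaRun, Finset.singleton_biUnion, pfaRun_singleton_cons]
    cases h : δ q a with
    | none => simp [h, pfaToNfa, nfaRun_empty]
    | some r => simp [h, pfaToNfa, ih]

lemma nfaD3word_pfaToNfa {n m : ℕ} (hn : 1 ≤ n) (δ : Fin n → Fin m → Option (Fin n))
    (w : List (Fin m)) :
    nfaD3word (pfaToNfa δ) w ↔ pfaSync δ Finset.univ w := by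
  rw [pfaSync_univ_iff hn]
  unfold nfaD3word
  simp only [pfaToNfa_run]
/-- Alphabet size for the PFA built from an NFA. -/
abbrev pfaAlpha (n m : ℕ) : ℕ := Fintype.card (Fin m × (Fin n → Fin n))

noncomputable def alphaEquiv (n m : ℕ) : Fin (pfaAlpha n m) ≃ Fin m × (Fin n → Fin n) :=
  (Fintype.equivFin (Fin m × (Fin n → Fin n))).symm

noncomputable def nfaToPfa {n m : ℕ} (δ : Fin n → Fin m → Finset (Fin n)) :
    Fin n → Fin (pfaAlpha n m) → Option (Fin n) :=
  fun q x =>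
    if ((alphaEquiv n m) x).2 q ∈ δ q ((alphaEquiv n m) x).1
    then some (((alphaEquiv n m) x).2 q) else none

lemma pfaRun_sub_nfaRun {n m : ℕ} (δ : Fin n → Fin m → Finset (Fin n)) :
    ∀ (w' : List (Fin (pfaAlpha n m))) (S : Finset (Fin n)),
      pfaRun (nfaToPfa δ) S w' ⊆
        nfaRun δ S (w'.map fun x => ((alphaEquiv n m) x).1) := by
  intro w'
  induction w' with
  | nil => intro S; simp [pfaRun, nfaRun]
  | cons x w' ih =>
    intro S
    rw [List.map_cons, nfaRun]
    by_cases hd : ∀ q ∈ S, (nfaToPfa δ q x).isSome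
    · rw [pfaRun, if_pos hd]
      refine (ih _).trans (nfaRun_mono δ _ _ _ ?_)
      intro s hs
      rcases Finset.mem_image.mp hs with ⟨q, hq, rfl⟩
      have h1 := hd q hq
      unfold nfaToPfa at h1 ⊢
      by_cases hc : ((alphaEquiv n m) x).2 q ∈ δ q ((alphaEquiv n m) x).1
      · rw [if_pos hc]
        simp only [Option.getD_some]
        exact Finset.mem_biUnion.mpr ⟨q, hq, hc⟩
      · rw [if_neg hc] at h1; simp at h1
    · rw [pfaRun, if_neg hd, pfaRun_empty]
      exact Finset.empty_subset _
noncomputable def liftWord {n m : ℕ} (δ : Fin n → Fin m → Finset (Fin n)) (r : Fin n) :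
    List (Fin m) → List (Fin (pfaAlpha n m))
  | [] => []
  | a :: w =>
      (alphaEquiv n m).symm (a, fun s =>
        if h : ∃ t, t ∈ δ s a ∧ r ∈ nfaRun δ {t} w then h.choose else s) :: liftWord δ r w

lemma liftWord_length {n m : ℕ} (δ : Fin n → Fin m → Finset (Fin n)) (r : Fin n) :
    ∀ (w : List (Fin m)), (liftWord δ r w).length = w.length := by
  intro w
  induction w with
  | nil => rfl
  | cons a w ih => simp [liftWord, ih]

lemma liftWord_run {n m : ℕ} (δ : Fin n → Fin m → Finset (Fin n)) (r : Fin n) :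
    ∀ (w : List (Fin m)) (S : Finset (Fin n)), S.Nonempty →
      (∀ s ∈ S, r ∈ nfaRun δ {s} w) →
      pfaRun (nfaToPfa δ) S (liftWord δ r w) = {r} := by
  intro w
  induction w with
  | nil =>
    intro S hS hr
    have hsub : S ⊆ {r} := by
      intro s hs
      have : r = s := by simpa [nfaRun] using hr s hs
      simp [this]
    rw [liftWord]
    show S = {r}
    exact (Finset.Nonempty.subset_singleton_iff hS).mp hsub
  | cons a w ih =>
    intro S hS hr
    set f : Fin n → Fin n := fun s =>
      if h : ∃ t, t ∈ δ s a ∧ r ∈ nfaRun δ {t} w then h.choose else s with hf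
    set x : Fin (pfaAlpha n m) := (alphaEquiv n m).symm (a, f) with hx
    have hax : (alphaEquiv n m) x = (a, f) := by rw [hx, Equiv.apply_symm_apply]
    have hEx : ∀ s ∈ S, ∃ t, t ∈ δ s a ∧ r ∈ nfaRun δ {t} w := by
      intro s hs
      have := hr s hs
      rw [nfaRun, Finset.singleton_biUnion, nfaRun_biUnion] at this
      rcases Finset.mem_biUnion.mp this with ⟨t, ht, hrt⟩
      exact ⟨t, ht, hrt⟩
    have hfs : ∀ s ∈ S, f s ∈ δ s a ∧ r ∈ nfaRun δ {f s} w := by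
      intro s hs
      have h := hEx s hs
      rw [hf]
      simp only [dif_pos h]
      exact h.choose_spec
    have hd : ∀ s ∈ S, (nfaToPfa δ s x).isSome := by
      intro s hs
      unfold nfaToPfa
      rw [hax]
      simp only []
      rw [if_pos (hfs s hs).1]
      rfl
    have hget : ∀ s ∈ S, (nfaToPfa δ s x).getD s = f s := by
      intro s hs
      unfold nfaToPfa
      rw [hax]
      simp only []
      rw [if_pos (hfs s hs).1]
      rfl
    rw [liftWord]
    show pfaRun (nfaToPfa δ) S (x :: liftWord δ r w) = {r}
    rw [pfaRun, if_pos hd]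
    have himg : S.image (fun q => (nfaToPfa δ q x).getD q) = S.image f :=
      Finset.image_congr (fun s hs => hget s hs)
    rw [himg]
    refine ih _ (hS.image _) ?_
    intro s hs
    rcases Finset.mem_image.mp hs with ⟨q, hq, rfl⟩
    exact (hfs q hq).2
lemma pfa_of_nfa {n : ℕ} (hn : 1 ≤ n) (l : ℕ)
    (h : ∃ (m : ℕ) (δ : Fin n → Fin m → Finset (Fin n)),
        (∃ w, nfaD3word δ w ∧ w.length = l) ∧ ∀ w, nfaD3word δ w → l ≤ w.length) :
    ∃ (m : ℕ) (δ : Fin n → Fin m → Option (Fin n)),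
        (∃ w, pfaSync δ Finset.univ w ∧ w.length = l) ∧
          ∀ w, pfaSync δ Finset.univ w → l ≤ w.length := by
  have : NeZero n := ⟨by omega⟩
  obtain ⟨m, δ, ⟨w, ⟨r, hr⟩, hlen⟩, hmin⟩ := h
  refine ⟨pfaAlpha n m, nfaToPfa δ, ⟨liftWord δ r w, ?_, ?_⟩, ?_⟩
  · unfold pfaSync
    rw [liftWord_run δ r w Finset.univ Finset.univ_nonempty (fun s _ => hr s)]
    exact Finset.card_singleton r
  · rw [liftWord_length, hlen]
  · intro w' hsync
    rcases Finset.card_eq_one.mp hsync with ⟨r', hr'⟩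
    have hne : (pfaRun (nfaToPfa δ) (Finset.univ : Finset (Fin n)) w').Nonempty := by
      rw [hr']; exact Finset.singleton_nonempty r'
    have hd3 : nfaD3word δ (w'.map fun x => ((alphaEquiv n m) x).1) := by
      refine ⟨r', fun q => ?_⟩
      have hsub := pfaRun_subset (nfaToPfa δ) w' {q} Finset.univ (Finset.subset_univ _) hne
      rcases hsub.2 (Finset.singleton_nonempty q) with ⟨y, hy⟩
      have : y = r' := by
        have := hsub.1 hy
        rwa [hr', Finset.mem_singleton] at this
      subst this
      exact pfaRun_sub_nfaRun δ w' {q} hy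
    have := hmin _ hd3
    rwa [List.length_map] at this

lemma nfa_of_pfa {n : ℕ} (hn : 1 ≤ n) (l : ℕ)
    (h : ∃ (m : ℕ) (δ : Fin n → Fin m → Option (Fin n)),
        (∃ w, pfaSync δ Finset.univ w ∧ w.length = l) ∧
          ∀ w, pfaSync δ Finset.univ w → l ≤ w.length) :
    ∃ (m : ℕ) (δ : Fin n → Fin m → Finset (Fin n)),
        (∃ w, nfaD3word δ w ∧ w.length = l) ∧ ∀ w, nfaD3word δ w → l ≤ w.length := by
  obtain ⟨m, δ, ⟨w, hw, hlen⟩, hmin⟩ := h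
  exact ⟨m, pfaToNfa δ,
    ⟨w, (nfaD3word_pfaToNfa hn δ w).mpr hw, hlen⟩,
    fun w' hw' => hmin w' ((nfaD3word_pfaToNfa hn δ w').mp hw')⟩

theorem stmt16 (n : ℕ) (hn : 1 ≤ n) :
    (∀ l : ℕ,
      (∃ (m : ℕ) (δ : Fin n → Fin m → Finset (Fin n)),
        (∃ w, nfaD3word δ w ∧ w.length = l) ∧ ∀ w, nfaD3word δ w → l ≤ w.length) ↔
      (∃ (m : ℕ) (δ : Fin n → Fin m → Option (Fin n)),
        (∃ w, pfaSync δ Finset.univ w ∧ w.length = l) ∧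
          ∀ w, pfaSync δ Finset.univ w → l ≤ w.length)) ∧
    -- in particular, the maximum of d₃ over D3-directing NFAs with n states
    -- equals the maximum careful synchronization length p(n) over PFAs with n states
    sSup {l : ℕ | ∃ (m : ℕ) (δ : Fin n → Fin m → Finset (Fin n)),
        (∃ w, nfaD3word δ w ∧ w.length = l) ∧ ∀ w, nfaD3word δ w → l ≤ w.length} =
      sSup {l : ℕ | ∃ (m : ℕ) (δ : Fin n → Fin m → Option (Fin n)),
        (∃ w, pfaSync δ Finset.univ w ∧ w.length = l) ∧
          ∀ w, pfaSync δ Finset.univ w → l ≤ w.length} := by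
  have hiff : ∀ l : ℕ,
      (∃ (m : ℕ) (δ : Fin n → Fin m → Finset (Fin n)),
        (∃ w, nfaD3word δ w ∧ w.length = l) ∧ ∀ w, nfaD3word δ w → l ≤ w.length) ↔
      (∃ (m : ℕ) (δ : Fin n → Fin m → Option (Fin n)),
        (∃ w, pfaSync δ Finset.univ w ∧ w.length = l) ∧
          ∀ w, pfaSync δ Finset.univ w → l ≤ w.length) :=
    fun l => ⟨pfa_of_nfa hn l, nfa_of_pfa hn l⟩
  refine ⟨hiff, ?_⟩
  congr 1
  exact Set.ext fun l => hiff l
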